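/- Fix an integer k ≥ 1 and t ≥ 0. The k-cluster sublevel graph G^(k)_t is nonempty and connected if and only if G*_t has exactly one connected component with at least k vertices. -/

import Mathlib

open ENNReal

variable {V : Type*}

/-- The sublevel graph `G*_t`: edges of `G` with weight at most `t`. -/
def sublevel (G : SimpleGraph V) (W : Sym2 V → NNReal) (t : ℝ≥0∞) : SimpleGraph V where
  Adj u v := G.Adj u v ∧ (W s(u, v) : ℝ≥0∞) ≤ t
  symm := by
    constructor
    intro u v h
    exact ⟨h.1.symm, by rw [Sym2.eq_swap]; exact h.2⟩
  loopless := ⟨fun v h => G.loopless.irrefl v h.1⟩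

/-- `N_t(v)`: the number of vertices in the connected component of `v` in `G*_t`. -/
noncomputable def clusterSize (G : SimpleGraph V) (W : Sym2 V → NNReal) (t : ℝ≥0∞) (v : V) : ℕ :=
  Set.ncard {u | (sublevel G W t).Reachable v u}

/-- `τ_k(v) = inf {t : N_t(v) ≥ k}`, the `k`-cluster filtration value of a vertex. -/
noncomputable def tauV (G : SimpleGraph V) (W : Sym2 V → NNReal) (k : ℕ) (v : V) : ℝ≥0∞ :=
  sInf {t : ℝ≥0∞ | k ≤ clusterSize G W t v}

/-- `τ_k(e) = max (τ_k(u), τ_k(v), W(e))`, the `k`-cluster filtration value of an edge. -/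
noncomputable def tauEdge (G : SimpleGraph V) (W : Sym2 V → NNReal) (k : ℕ) : Sym2 V → ℝ≥0∞ :=
  Sym2.lift ⟨fun u v => max (max (tauV G W k u) (tauV G W k v)) (W s(u, v)),
    by intro u v; simp only []; rw [max_comm (tauV G W k u), Sym2.eq_swap]⟩

/-- The `k`-cluster sublevel graph `G^(k)_t`: its vertices are those `v` with
`τ_k(v) ≤ t` and its edges are those `e` with `τ_k(e) ≤ t`. -/
def kClusterGraph (G : SimpleGraph V) (W : Sym2 V → NNReal) (k : ℕ) (t : ℝ≥0∞) :
    SimpleGraph {v : V // tauV G W k v ≤ t} where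
  Adj u v := G.Adj u.1 v.1 ∧ tauEdge G W k s(u.1, v.1) ≤ t
  symm := by
    constructor
    intro u v h
    exact ⟨h.1.symm, by rw [Sym2.eq_swap]; exact h.2⟩
  loopless := ⟨fun v h => G.loopless.irrefl v.1 h.1⟩

section helpers

variable (G : SimpleGraph V) (W : Sym2 V → NNReal)

lemma sublevel_mono {s t : ℝ≥0∞} (h : s ≤ t) : sublevel G W s ≤ sublevel G W t :=
  fun _ _ ha => ⟨ha.1, ha.2.trans h⟩

lemma clusterSize_mono [Fintype V] {s t : ℝ≥0∞} (h : s ≤ t) (v : V) :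
    clusterSize G W s v ≤ clusterSize G W t v :=
  Set.ncard_le_ncard (fun _ hu => hu.mono (sublevel_mono G W h)) (Set.toFinite _)

lemma tauEdge_mk (k : ℕ) (u v : V) :
    tauEdge G W k s(u, v) = max (max (tauV G W k u) (tauV G W k v)) (W s(u, v)) := rfl

lemma clusterSize_eq_ncard_supp (t : ℝ≥0∞) (v : V) :
    clusterSize G W t v = ((sublevel G W t).connectedComponentMk v).supp.ncard := by
  unfold clusterSize
  congr 1
  ext u
  simp only [Set.mem_setOf_eq, SimpleGraph.ConnectedComponent.mem_supp_iff,
    SimpleGraph.ConnectedComponent.eq]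
  exact SimpleGraph.reachable_comm

lemma clusterSize_eq_of_reachable {t : ℝ≥0∞} {u v : V}
    (h : (sublevel G W t).Reachable u v) :
    clusterSize G W t u = clusterSize G W t v := by
  rw [clusterSize_eq_ncard_supp, clusterSize_eq_ncard_supp,
    SimpleGraph.ConnectedComponent.eq.mpr h]

lemma tauV_le_iff [Fintype V] {t : ℝ≥0∞} (ht : t ≠ ⊤) (k : ℕ) (v : V) :
    tauV G W k v ≤ t ↔ k ≤ clusterSize G W t v := by
  constructor
  · intro h
    unfold tauV at h
    set S := {s : ℝ≥0∞ | k ≤ clusterSize G W s v} with hS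
    set T := (Set.range fun e : Sym2 V => (W e : ℝ≥0∞)) ∩ Set.Ioi (sInf S) with hT
    have hTfin : T.Finite := (Set.finite_range _).inter_of_left _
    have hlt : sInf S < sInf T := by
      rcases T.eq_empty_or_nonempty with he | hne
      · rw [he, sInf_empty]
        exact lt_of_le_of_lt h ht.lt_top
      · exact (hne.csInf_mem hTfin).2
    obtain ⟨s, hsS, hs⟩ := sInf_lt_iff.mp hlt
    have hsub : sublevel G W s ≤ sublevel G W (sInf S) := by
      intro a b hab
      refine ⟨hab.1, ?_⟩
      by_contra hw
      push_neg at hw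
      have hmem : (W s(a, b) : ℝ≥0∞) ∈ T := ⟨⟨_, rfl⟩, hw⟩
      exact absurd (sInf_le hmem) (not_le.mpr (lt_of_le_of_lt hab.2 hs))
    have h1 : k ≤ clusterSize G W (sInf S) v :=
      le_trans hsS (Set.ncard_le_ncard (fun _ hu => hu.mono hsub) (Set.toFinite _))
    exact le_trans h1 (clusterSize_mono G W h v)
  · intro h
    exact sInf_le h

/-- The forgetful homomorphism from the `k`-cluster graph to the sublevel graph. -/
def kClusterHom (k : ℕ) (t : ℝ≥0∞) : kClusterGraph G W k t →g sublevel G W t where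
  toFun := Subtype.val
  map_rel' := fun h => ⟨h.1, le_trans (le_max_right _ _) h.2⟩

lemma lift_walk (k : ℕ) {t : ℝ≥0∞} {u v : V} (p : (sublevel G W t).Walk u v) :
    ∀ (hu : tauV G W k u ≤ t), k ≤ clusterSize G W t u →
      ∀ (hv : tauV G W k v ≤ t),
      (kClusterGraph G W k t).Reachable ⟨u, hu⟩ ⟨v, hv⟩ := by
  induction p with
  | nil => exact fun hu _ hv => SimpleGraph.Reachable.refl _
  | @cons a b c hab p ih =>
    intro ha hca hv
    have hcb : k ≤ clusterSize G W t b := by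
      rwa [clusterSize_eq_of_reachable G W hab.reachable] at hca
    have hb : tauV G W k b ≤ t := sInf_le hcb
    have hadj : (kClusterGraph G W k t).Adj ⟨a, ha⟩ ⟨b, hb⟩ :=
      ⟨hab.1, le_trans (le_of_eq (tauEdge_mk G W k a b))
        (max_le (max_le ha hb) hab.2)⟩
    exact hadj.reachable.trans (ih hb hcb hv)

end helpers

/-- For `k ≥ 1` and `t ≥ 0`, the graph `G^(k)_t` is nonempty and
connected if and only if `G*_t` has exactly one connected component with at least
`k` vertices. -/
theorem kClusterGraph_connected_iff [Fintype V] (G : SimpleGraph V) (W : Sym2 V → NNReal)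
    (k : ℕ) (hk : 1 ≤ k) (t : NNReal) :
    (kClusterGraph G W k (t : ℝ≥0∞)).Connected ↔
      ∃! c : (sublevel G W (t : ℝ≥0∞)).ConnectedComponent, k ≤ c.supp.ncard := by
  have ht : (t : ℝ≥0∞) ≠ ⊤ := coe_ne_top
  constructor
  · intro h
    obtain ⟨⟨v0, hv0⟩⟩ := h.nonempty
    have hcs0 : k ≤ clusterSize G W (t : ℝ≥0∞) v0 := (tauV_le_iff G W ht k v0).mp hv0
    refine ⟨(sublevel G W (t : ℝ≥0∞)).connectedComponentMk v0, ?_, ?_⟩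
    · exact le_of_le_of_eq hcs0 (clusterSize_eq_ncard_supp G W _ v0)
    · intro c hc
      obtain ⟨w, rfl⟩ := c.exists_rep
      have hc2 : k ≤ clusterSize G W (t : ℝ≥0∞) w :=
        le_of_le_of_eq hc (clusterSize_eq_ncard_supp G W _ w).symm
      have hw : tauV G W k w ≤ (t : ℝ≥0∞) := sInf_le hc2
      have hr := h.preconnected ⟨w, hw⟩ ⟨v0, hv0⟩
      have hr' : (sublevel G W (t : ℝ≥0∞)).Reachable w v0 :=
        hr.map (kClusterHom G W k (t : ℝ≥0∞))
      exact SimpleGraph.ConnectedComponent.eq.mpr hr'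
  · rintro ⟨c, hc, huniq⟩
    obtain ⟨v0, rfl⟩ := c.exists_rep
    have hc2 : k ≤ clusterSize G W (t : ℝ≥0∞) v0 :=
      le_of_le_of_eq hc (clusterSize_eq_ncard_supp G W _ v0).symm
    have hv0 : tauV G W k v0 ≤ (t : ℝ≥0∞) := sInf_le hc2
    have hne : Nonempty {v : V // tauV G W k v ≤ (t : ℝ≥0∞)} := ⟨⟨v0, hv0⟩⟩
    refine ⟨?_⟩
    rintro ⟨u, hu⟩ ⟨v, hv⟩
    have hcu : k ≤ clusterSize G W (t : ℝ≥0∞) u := (tauV_le_iff G W ht k u).mp hu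
    have hcv : k ≤ clusterSize G W (t : ℝ≥0∞) v := (tauV_le_iff G W ht k v).mp hv
    have hcu' := huniq ((sublevel G W (t : ℝ≥0∞)).connectedComponentMk u)
      (le_of_le_of_eq hcu (clusterSize_eq_ncard_supp G W _ u))
    have hcv' := huniq ((sublevel G W (t : ℝ≥0∞)).connectedComponentMk v)
      (le_of_le_of_eq hcv (clusterSize_eq_ncard_supp G W _ v))
    have hreach : (sublevel G W (t : ℝ≥0∞)).Reachable u v :=
      SimpleGraph.ConnectedComponent.eq.mp (hcu'.trans hcv'.symm)
    obtain ⟨p⟩ := hreach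
    exact lift_walk G W k p hu hcu hv
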